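/- Under the regular partition assumption, E[pen_VF(m, B, V−1)] = E[penid(m)] = 2 E[‖ŝ_m − s_m‖²] = 2 D_m / n, where D_m = P Ψ_m − ‖s_m‖² and Ψ_m = ∑_{λ∈Λ_m} ψ_λ². -/

import Mathlib

open Finset MeasureTheory

/-- Empirical mean of `f` over the sample points indexed by `A`. -/
noncomputable def emp {X : Type*} {n : ℕ} (ξ : Fin n → X) (A : Finset (Fin n))
    (f : X → ℝ) : ℝ :=
  (A.card : ℝ)⁻¹ * ∑ i ∈ A, f (ξ i)

/-- `P_n^{(A)} γ(t)` for `t ∈ S_m` with coordinates `t : Λ → ℝ` in the orthonormal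
basis `(ψ l)`: `‖t‖² − 2 P_n^{(A)} t`. -/
noncomputable def empRisk {X : Type*} {Λ : Type*} [Fintype Λ] {n : ℕ}
    (ψ : Λ → X → ℝ) (ξ : Fin n → X) (A : Finset (Fin n)) (t : Λ → ℝ) : ℝ :=
  ∑ l, (t l) ^ 2 - 2 * ∑ l, t l * emp ξ A (ψ l)

section Aux

variable {X : Type*} [MeasurableSpace X] {P : Measure X} [IsProbabilityMeasure P] {n : ℕ}

private lemma pi_pair (f : X → ℝ) (hf : MemLp f 2 P) (i j : Fin n) :
    Integrable (fun ω : Fin n → X => f (ω i) * f (ω j)) (Measure.pi fun _ => P) ∧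
    ∫ ω : Fin n → X, f (ω i) * f (ω j) ∂(Measure.pi fun _ => P) =
      if i = j then ∫ x, f x ^ 2 ∂P else (∫ x, f x ∂P) ^ 2 := by
  letI : MeasureSpace X := ⟨P⟩
  haveI : IsProbabilityMeasure (volume : Measure X) := ‹IsProbabilityMeasure P›
  have hvol : (Measure.pi fun _ : Fin n => P) = (volume : Measure (Fin n → X)) :=
    (volume_pi).symm
  rw [hvol]
  replace hf : MemLp f 2 (volume : Measure X) := hf
  have hPv : ∀ g : X → ℝ, ∫ x, g x ∂P = ∫ x, g x := fun _ => rfl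
  simp only [hPv]
  by_cases h : i = j
  · subst h
    set g : Fin n → X → ℝ := fun k x => if k = i then f x ^ 2 else 1 with hg
    have hprod : (fun ω : Fin n → X => f (ω i) * f (ω i)) =
        fun ω => ∏ k, g k (ω k) := by
      funext ω
      rw [hg]
      simp [Finset.prod_ite_eq', sq]
    rw [hprod]
    have hint : ∀ k, Integrable (g k) := by
      intro k
      by_cases hk : k = i <;> simp [hg, hk, hf.integrable_sq, integrable_const]
    refine ⟨Integrable.fintype_prod hint, ?_⟩
    rw [volume_pi, MeasureTheory.integral_fintype_prod_eq_prod (fun k => g k)]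
    have : ∀ k, ∫ x, g k x = if k = i then ∫ x, f x ^ 2 else 1 := by
      intro k
      by_cases hk : k = i <;> simp [hg, hk]
    simp_rw [this]
    simp [Finset.prod_ite_eq']
  · set g : Fin n → X → ℝ := fun k x => if k = i then f x else if k = j then f x else 1
      with hg
    have hprod : (fun ω : Fin n → X => f (ω i) * f (ω j)) =
        fun ω => ∏ k, g k (ω k) := by
      funext ω
      rw [← Finset.mul_prod_erase Finset.univ _ (Finset.mem_univ i)]
      rw [← Finset.mul_prod_erase _ _ (Finset.mem_erase.2 ⟨Ne.symm h, Finset.mem_univ j⟩)]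
      rw [Finset.prod_eq_one]
      · simp [hg, Ne.symm h]
      · intro k hk
        simp only [Finset.mem_erase] at hk
        simp [hg, hk.1, hk.2.1]
    rw [hprod]
    have hf1 : Integrable f := hf.integrable one_le_two
    have hint : ∀ k, Integrable (g k) := by
      intro k
      by_cases hk : k = i
      · simpa [hg, hk] using hf1
      · by_cases hk' : k = j <;> simp [hg, hk, hk', hf1, integrable_const]
    refine ⟨Integrable.fintype_prod hint, ?_⟩
    rw [volume_pi, MeasureTheory.integral_fintype_prod_eq_prod (fun k => g k)]
    have hval : ∀ k, ∫ x, g k x = if k = i then ∫ x, f x else if k = j then ∫ x, f x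
        else 1 := by
      intro k
      by_cases hk : k = i
      · simp [hg, hk]
      · by_cases hk' : k = j <;> simp [hg, hk, hk']
    simp_rw [hval]
    rw [if_neg h, ← Finset.mul_prod_erase Finset.univ _ (Finset.mem_univ i),
      ← Finset.mul_prod_erase _ _ (Finset.mem_erase.2 ⟨Ne.symm h, Finset.mem_univ j⟩),
      Finset.prod_eq_one]
    · simp [Ne.symm h, sq]
    · intro k hk
      simp only [Finset.mem_erase] at hk
      simp [hk.1, hk.2.1]

private lemma pi_single (f : X → ℝ) (hf : MemLp f 2 P) (i : Fin n) :
    Integrable (fun ω : Fin n → X => f (ω i)) (Measure.pi fun _ => P) ∧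
    ∫ ω : Fin n → X, f (ω i) ∂(Measure.pi fun _ => P) = ∫ x, f x ∂P := by
  letI : MeasureSpace X := ⟨P⟩
  haveI : IsProbabilityMeasure (volume : Measure X) := ‹IsProbabilityMeasure P›
  have hvol : (Measure.pi fun _ : Fin n => P) = (volume : Measure (Fin n → X)) :=
    (volume_pi).symm
  rw [hvol]
  replace hf : MemLp f 2 (volume : Measure X) := hf
  have hPv : ∀ g : X → ℝ, ∫ x, g x ∂P = ∫ x, g x := fun _ => rfl
  simp only [hPv]
  have hf1 : Integrable f := hf.integrable one_le_two
  set g : Fin n → X → ℝ := fun k x => if k = i then f x else 1 with hg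
  have hprod : (fun ω : Fin n → X => f (ω i)) = fun ω => ∏ k, g k (ω k) := by
    funext ω
    rw [hg]
    simp [Finset.prod_ite_eq']
  rw [hprod]
  have hint : ∀ k, Integrable (g k) := by
    intro k
    by_cases hk : k = i <;> simp [hg, hk, hf1, integrable_const]
  refine ⟨Integrable.fintype_prod hint, ?_⟩
  rw [volume_pi, MeasureTheory.integral_fintype_prod_eq_prod (fun k => g k)]
  have : ∀ k, ∫ x, g k x = if k = i then ∫ x, f x else 1 := by
    intro k
    by_cases hk : k = i <;> simp [hg, hk]
  simp_rw [this]
  simp [Finset.prod_ite_eq']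

private lemma pi_sum_mul (f : X → ℝ) (hf : MemLp f 2 P) (A C : Finset (Fin n)) :
    Integrable (fun ω : Fin n → X => (∑ i ∈ A, f (ω i)) * (∑ j ∈ C, f (ω j)))
      (Measure.pi fun _ => P) ∧
    ∫ ω : Fin n → X, (∑ i ∈ A, f (ω i)) * (∑ j ∈ C, f (ω j)) ∂(Measure.pi fun _ => P) =
      ((A ∩ C).card : ℝ) * ((∫ x, f x ^ 2 ∂P) - (∫ x, f x ∂P) ^ 2)
        + (A.card : ℝ) * C.card * (∫ x, f x ∂P) ^ 2 := by
  have hexp : (fun ω : Fin n → X => (∑ i ∈ A, f (ω i)) * (∑ j ∈ C, f (ω j))) =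
      fun ω => ∑ i ∈ A, ∑ j ∈ C, f (ω i) * f (ω j) := by
    funext ω; rw [Finset.sum_mul_sum]
  rw [hexp]
  have hint : Integrable (fun ω : Fin n → X => ∑ i ∈ A, ∑ j ∈ C, f (ω i) * f (ω j))
      (Measure.pi fun _ => P) :=
    integrable_finset_sum _ fun i _ => integrable_finset_sum _ fun j _ => (pi_pair f hf i j).1
  refine ⟨hint, ?_⟩
  rw [integral_finset_sum _ fun i _ =>
    integrable_finset_sum _ fun j _ => (pi_pair f hf i j).1]
  have : ∀ i ∈ A, ∫ ω : Fin n → X, ∑ j ∈ C, f (ω i) * f (ω j) ∂(Measure.pi fun _ => P)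
      = ∑ j ∈ C, if i = j then ∫ x, f x ^ 2 ∂P else (∫ x, f x ∂P) ^ 2 := by
    intro i _
    rw [integral_finset_sum _ fun j _ => (pi_pair f hf i j).1]
    exact Finset.sum_congr rfl fun j _ => (pi_pair f hf i j).2
  rw [Finset.sum_congr rfl this]
  set M2 := ∫ x, f x ^ 2 ∂P
  set c := ∫ x, f x ∂P
  have h1 : ∀ i : Fin n, ∑ j ∈ C, (if i = j then M2 else c ^ 2)
      = (if i ∈ C then M2 - c ^ 2 else 0) + (C.card : ℝ) * c ^ 2 := by
    intro i
    have : ∀ j : Fin n, (if i = j then M2 else c ^ 2)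
        = (if i = j then M2 - c ^ 2 else 0) + c ^ 2 := by
      intro j; split <;> ring
    simp_rw [this]
    rw [Finset.sum_add_distrib, Finset.sum_ite_eq, Finset.sum_const, nsmul_eq_mul]
  simp_rw [h1]
  rw [Finset.sum_add_distrib, Finset.sum_const, nsmul_eq_mul, Finset.sum_ite_mem,
    Finset.sum_const, nsmul_eq_mul]
  ring

private lemma integrable_emp_mul (f : X → ℝ) (hf : MemLp f 2 P) (A C : Finset (Fin n)) :
    Integrable (fun ω : Fin n → X => emp ω A f * emp ω C f) (Measure.pi fun _ => P) := by
  have : (fun ω : Fin n → X => emp ω A f * emp ω C f) =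
      fun ω => ((A.card : ℝ)⁻¹ * (C.card : ℝ)⁻¹) *
        ((∑ i ∈ A, f (ω i)) * (∑ j ∈ C, f (ω j))) := by
    funext ω; simp only [emp]; ring
  rw [this]
  exact ((pi_sum_mul f hf A C).1).const_mul _

private lemma integral_emp_mul (f : X → ℝ) (hf : MemLp f 2 P) {A C : Finset (Fin n)}
    (hA : A.Nonempty) (hC : C.Nonempty) :
    ∫ ω : Fin n → X, emp ω A f * emp ω C f ∂(Measure.pi fun _ => P) =
      (∫ x, f x ∂P) ^ 2 + ((A ∩ C).card : ℝ) / ((A.card : ℝ) * C.card) *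
        ((∫ x, f x ^ 2 ∂P) - (∫ x, f x ∂P) ^ 2) := by
  have h : (fun ω : Fin n → X => emp ω A f * emp ω C f) =
      fun ω => ((A.card : ℝ)⁻¹ * (C.card : ℝ)⁻¹) *
        ((∑ i ∈ A, f (ω i)) * (∑ j ∈ C, f (ω j))) := by
    funext ω; simp only [emp]; ring
  rw [h, integral_const_mul, (pi_sum_mul f hf A C).2]
  have hA0 : (A.card : ℝ) ≠ 0 := Nat.cast_ne_zero.2 (Finset.card_ne_zero_of_mem hA.choose_spec)
  have hC0 : (C.card : ℝ) ≠ 0 := Nat.cast_ne_zero.2 (Finset.card_ne_zero_of_mem hC.choose_spec)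
  field_simp
  ring

private lemma integrable_emp (f : X → ℝ) (hf : MemLp f 2 P) (A : Finset (Fin n)) :
    Integrable (fun ω : Fin n → X => emp ω A f) (Measure.pi fun _ => P) := by
  unfold emp
  exact (integrable_finset_sum _ fun i _ => (pi_single f hf i).1).const_mul _

private lemma integral_emp (f : X → ℝ) (hf : MemLp f 2 P) {A : Finset (Fin n)}
    (hA : A.Nonempty) :
    ∫ ω : Fin n → X, emp ω A f ∂(Measure.pi fun _ => P) = ∫ x, f x ∂P := by
  unfold emp
  rw [integral_const_mul, integral_finset_sum _ fun i _ => (pi_single f hf i).1]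
  have : ∀ i ∈ A, ∫ ω : Fin n → X, f (ω i) ∂(Measure.pi fun _ => P) = ∫ x, f x ∂P :=
    fun i _ => (pi_single f hf i).2
  rw [Finset.sum_congr rfl this, Finset.sum_const, nsmul_eq_mul, ← mul_assoc,
    inv_mul_cancel₀ (Nat.cast_ne_zero.2 (Finset.card_ne_zero_of_mem hA.choose_spec)), one_mul]

end Aux
section Main

private lemma sum_key {Λ : Type*} [Fintype Λ] (t u v : Λ → ℝ) :
    (∑ l, (t l) ^ 2 - 2 * ∑ l, t l * u l) - (∑ l, (t l) ^ 2 - 2 * ∑ l, t l * v l)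
      = ∑ l, (2 * (t l * v l) - 2 * (t l * u l)) := by
  rw [Finset.sum_sub_distrib, ← Finset.mul_sum, ← Finset.mul_sum]
  ring

private lemma sum_key2 {Λ : Type*} [Fintype Λ] (e cc : Λ → ℝ) :
    (∑ l, (e l) ^ 2 - 2 * ∑ l, e l * cc l) - (∑ l, (e l) ^ 2 - 2 * ∑ l, (e l) ^ 2)
      = ∑ l, (2 * (e l * e l) - 2 * (cc l * e l)) := by
  have h1 : ∑ l, (e l) ^ 2 = ∑ l, e l * e l := Finset.sum_congr rfl fun l _ => by ring
  have h2 : ∑ l, e l * cc l = ∑ l, cc l * e l := Finset.sum_congr rfl fun l _ => by ring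
  rw [Finset.sum_sub_distrib, ← Finset.mul_sum, ← Finset.mul_sum, h1, h2]
  ring



/-- Under the regular partition assumption, for an i.i.d. sample with distribution `P`:
`E[pen_VF(m,B,V−1)] = E[penid(m)] = 2 E[‖ŝ_m − s_m‖²] = 2 D_m / n`, where
`D_m = P Ψ_m − ‖s_m‖²`. -/
theorem stmt8 {X : Type*} [MeasurableSpace X] (P : Measure X) [IsProbabilityMeasure P]
    {n V : ℕ} (hn : 0 < n) (hV : 2 ≤ V) (hVn : V ∣ n)
    {Λ : Type*} [Fintype Λ] (ψ : Λ → X → ℝ)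
    (hψ : ∀ l, MemLp (ψ l) 2 P)
    (B : Fin V → Finset (Fin n))
    (hdisj : ∀ K K', K ≠ K' → Disjoint (B K) (B K'))
    (hcover : ∀ i, ∃ K, i ∈ B K)
    (hcard : ∀ K, (B K).card = n / V) :
    let μn : Measure (Fin n → X) := Measure.pi fun _ => P
    let c : Λ → ℝ := fun l => ∫ x, ψ l x ∂P
    let Dm : ℝ := (∑ l, ∫ x, (ψ l x) ^ 2 ∂P) - ∑ l, (c l) ^ 2
    let α : (Fin n → X) → Finset (Fin n) → Λ → ℝ := fun ξ A l => emp ξ A (ψ l)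
    let penVF : (Fin n → X) → ℝ := fun ξ =>
      (((V : ℝ) - 1) / V) * ∑ K,
        (empRisk ψ ξ Finset.univ (α ξ (B K)ᶜ) - empRisk ψ ξ (B K)ᶜ (α ξ (B K)ᶜ))
    let penid : (Fin n → X) → ℝ := fun ξ =>
      (∑ l, (α ξ Finset.univ l) ^ 2 - 2 * ∑ l, α ξ Finset.univ l * c l)
        - (∑ l, (α ξ Finset.univ l) ^ 2 - 2 * ∑ l, (α ξ Finset.univ l) ^ 2)
    (∫ ω, penVF ω ∂μn) = 2 * Dm / n ∧
    (∫ ω, penid ω ∂μn) = 2 * Dm / n ∧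
    2 * (∫ ω, ∑ l, (α ω Finset.univ l - c l) ^ 2 ∂μn) = 2 * Dm / n := by
  intro μn c Dm α penVF penid
  have hμ : μn = Measure.pi fun _ => P := rfl
  -- arithmetic on cardinalities
  have hq : 0 < n / V := Nat.div_pos (Nat.le_of_dvd hn hVn) (by omega)
  have hcompl_card : ∀ K, ((B K)ᶜ : Finset (Fin n)).card = n / V * (V - 1) := by
    intro K
    rw [Finset.card_compl, Fintype.card_fin, hcard K]
    have h := Nat.div_mul_cancel hVn
    have h2 : n / V * V = n / V * (V - 1) + n / V := by
      have hV1 : V - 1 + 1 = V := by omega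
      calc n / V * V = n / V * (V - 1 + 1) := by rw [hV1]
        _ = n / V * (V - 1) + n / V := by ring
    omega
  have hcompl_ne : ∀ K, ((B K)ᶜ : Finset (Fin n)).Nonempty := by
    intro K
    rw [← Finset.card_pos, hcompl_card K]
    exact Nat.mul_pos hq (by omega)
  have huniv_ne : (Finset.univ : Finset (Fin n)).Nonempty := ⟨⟨0, hn⟩, Finset.mem_univ _⟩
  -- real constants
  set q : ℝ := ((n / V : ℕ) : ℝ) with hqdef
  have hqpos : (0 : ℝ) < q := by rw [hqdef]; exact_mod_cast hq
  have hq0 : q ≠ 0 := ne_of_gt hqpos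
  have hV0 : (V : ℝ) ≠ 0 := by positivity
  have hV1 : (V : ℝ) - 1 ≠ 0 := by
    have : (2 : ℝ) ≤ V := by exact_mod_cast hV
    nlinarith
  have hnq : (n : ℝ) = V * q := by
    rw [hqdef]
    have := Nat.mul_div_cancel' hVn
    exact_mod_cast (congrArg (fun m : ℕ => (m : ℝ)) this).symm
  have hn0 : (n : ℝ) ≠ 0 := by rw [hnq]; positivity
  have hacard : ∀ K, (((B K)ᶜ : Finset (Fin n)).card : ℝ) = q * ((V : ℝ) - 1) := by
    intro K
    rw [hcompl_card K, hqdef]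
    push_cast [Nat.cast_sub (by omega : 1 ≤ V)]
    ring
  have ha0 : q * ((V : ℝ) - 1) ≠ 0 := mul_ne_zero hq0 hV1
  have huc : ((Finset.univ : Finset (Fin n)).card : ℝ) = (n : ℝ) := by
    rw [Finset.card_univ, Fintype.card_fin]
  set d : Λ → ℝ := fun l => (∫ x, (ψ l x) ^ 2 ∂P) - (c l) ^ 2 with hd
  have hDm : Dm = ∑ l, d l := by
    rw [hd]
    show (∑ l, ∫ x, (ψ l x) ^ 2 ∂P) - ∑ l, (c l) ^ 2 = _
    rw [Finset.sum_sub_distrib]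
  -- key integral values
  have hcc : ∀ K (l : Λ), ∫ ω : Fin n → X, emp ω (B K)ᶜ (ψ l) * emp ω (B K)ᶜ (ψ l)
      ∂(Measure.pi fun _ => P) = (c l) ^ 2 + 1 / (q * ((V : ℝ) - 1)) * d l := by
    intro K l
    rw [integral_emp_mul (ψ l) (hψ l) (hcompl_ne K) (hcompl_ne K), Finset.inter_self,
      hacard K]
    congr 1
    rw [hd]
    field_simp
    rfl
  have hcu : ∀ K (l : Λ), ∫ ω : Fin n → X, emp ω (B K)ᶜ (ψ l) * emp ω Finset.univ (ψ l)
      ∂(Measure.pi fun _ => P) = (c l) ^ 2 + 1 / ((V : ℝ) * q) * d l := by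
    intro K l
    rw [integral_emp_mul (ψ l) (hψ l) (hcompl_ne K) huniv_ne, Finset.inter_univ,
      hacard K, huc, hnq]
    congr 1
    rw [hd]
    field_simp
    ring
  have huu : ∀ l : Λ, ∫ ω : Fin n → X, emp ω Finset.univ (ψ l) * emp ω Finset.univ (ψ l)
      ∂(Measure.pi fun _ => P) = (c l) ^ 2 + 1 / ((V : ℝ) * q) * d l := by
    intro l
    rw [integral_emp_mul (ψ l) (hψ l) huniv_ne huniv_ne, Finset.inter_self, huc, hnq]
    congr 1
    rw [hd]
    field_simp
    rfl
  have hu : ∀ l : Λ, ∫ ω : Fin n → X, emp ω Finset.univ (ψ l) ∂(Measure.pi fun _ => P)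
      = c l := fun l => integral_emp (ψ l) (hψ l) huniv_ne
  refine ⟨?_, ?_, ?_⟩
  -- Goal 1 : penVF
  · have hpen : penVF = fun ω => (((V : ℝ) - 1) / V) * ∑ K, ∑ l,
        (2 * (emp ω (B K)ᶜ (ψ l) * emp ω (B K)ᶜ (ψ l))
          - 2 * (emp ω (B K)ᶜ (ψ l) * emp ω Finset.univ (ψ l))) := by
      funext ω
      show (((V : ℝ) - 1) / V) * ∑ K,
        (empRisk ψ ω Finset.univ (α ω (B K)ᶜ) - empRisk ψ ω (B K)ᶜ (α ω (B K)ᶜ)) = _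
      congr 1
      refine Finset.sum_congr rfl fun K _ => ?_
      exact sum_key (α ω (B K)ᶜ) (fun l => emp ω Finset.univ (ψ l))
        (fun l => emp ω (B K)ᶜ (ψ l))
    rw [hμ, hpen, integral_const_mul]
    have hintl : ∀ (K : Fin V) (l : Λ), Integrable (fun ω : Fin n → X =>
        2 * (emp ω (B K)ᶜ (ψ l) * emp ω (B K)ᶜ (ψ l))
          - 2 * (emp ω (B K)ᶜ (ψ l) * emp ω Finset.univ (ψ l))) (Measure.pi fun _ => P) :=
      fun K l => ((integrable_emp_mul (ψ l) (hψ l) _ _).const_mul 2).sub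
        ((integrable_emp_mul (ψ l) (hψ l) _ _).const_mul 2)
    rw [integral_finset_sum _ fun K _ => integrable_finset_sum _ fun l _ => hintl K l]
    have hK : ∀ K ∈ (Finset.univ : Finset (Fin V)),
        (∫ ω : Fin n → X, ∑ l, (2 * (emp ω (B K)ᶜ (ψ l) * emp ω (B K)ᶜ (ψ l))
          - 2 * (emp ω (B K)ᶜ (ψ l) * emp ω Finset.univ (ψ l))) ∂(Measure.pi fun _ => P))
        = (2 / (q * ((V : ℝ) - 1)) - 2 / ((V : ℝ) * q)) * Dm := by
      intro K _
      rw [integral_finset_sum _ fun l _ => hintl K l]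
      have : ∀ l ∈ (Finset.univ : Finset Λ),
          (∫ ω : Fin n → X, (2 * (emp ω (B K)ᶜ (ψ l) * emp ω (B K)ᶜ (ψ l))
            - 2 * (emp ω (B K)ᶜ (ψ l) * emp ω Finset.univ (ψ l))) ∂(Measure.pi fun _ => P))
          = (2 / (q * ((V : ℝ) - 1)) - 2 / ((V : ℝ) * q)) * d l := by
        intro l _
        rw [integral_sub ((integrable_emp_mul (ψ l) (hψ l) _ _).const_mul 2)
          ((integrable_emp_mul (ψ l) (hψ l) _ _).const_mul 2),
          integral_const_mul, integral_const_mul, hcc K l, hcu K l]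
        field_simp
        ring
      rw [Finset.sum_congr rfl this, ← Finset.mul_sum, ← hDm]
    rw [Finset.sum_congr rfl hK, Finset.sum_const, Finset.card_univ, Fintype.card_fin,
      nsmul_eq_mul, hnq]
    field_simp
    ring
  -- Goal 2 : penid
  · have hpen : penid = fun ω => ∑ l,
        (2 * (emp ω Finset.univ (ψ l) * emp ω Finset.univ (ψ l))
          - 2 * (c l * emp ω Finset.univ (ψ l))) := by
      funext ω
      exact sum_key2 (fun l => emp ω Finset.univ (ψ l)) c
    rw [hμ, hpen]
    have hintl : ∀ l : Λ, Integrable (fun ω : Fin n → X =>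
        2 * (emp ω Finset.univ (ψ l) * emp ω Finset.univ (ψ l))
          - 2 * (c l * emp ω Finset.univ (ψ l))) (Measure.pi fun _ => P) :=
      fun l => ((integrable_emp_mul (ψ l) (hψ l) _ _).const_mul 2).sub
        (((integrable_emp (ψ l) (hψ l) _).const_mul (c l)).const_mul 2)
    rw [integral_finset_sum _ fun l _ => hintl l]
    have : ∀ l ∈ (Finset.univ : Finset Λ),
        (∫ ω : Fin n → X, (2 * (emp ω Finset.univ (ψ l) * emp ω Finset.univ (ψ l))
          - 2 * (c l * emp ω Finset.univ (ψ l))) ∂(Measure.pi fun _ => P))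
        = 2 / ((V : ℝ) * q) * d l := by
      intro l _
      rw [integral_sub ((integrable_emp_mul (ψ l) (hψ l) _ _).const_mul 2)
        (((integrable_emp (ψ l) (hψ l) _).const_mul (c l)).const_mul 2),
        integral_const_mul, integral_const_mul, integral_const_mul, huu l, hu l]
      field_simp
      ring
    rw [Finset.sum_congr rfl this, ← Finset.mul_sum, ← hDm, hnq]
    field_simp
  -- Goal 3
  · have hrw : (fun ω : Fin n → X => ∑ l, (α ω Finset.univ l - c l) ^ 2) = fun ω => ∑ l,
        (emp ω Finset.univ (ψ l) * emp ω Finset.univ (ψ l)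
          - 2 * (c l * emp ω Finset.univ (ψ l)) + (c l) ^ 2) := by
      funext ω
      refine Finset.sum_congr rfl fun l _ => ?_
      show (emp ω Finset.univ (ψ l) - c l) ^ 2 = _
      ring
    rw [hμ, hrw]
    have hintl : ∀ l : Λ, Integrable (fun ω : Fin n → X =>
        emp ω Finset.univ (ψ l) * emp ω Finset.univ (ψ l)
          - 2 * (c l * emp ω Finset.univ (ψ l)) + (c l) ^ 2) (Measure.pi fun _ => P) :=
      fun l => ((integrable_emp_mul (ψ l) (hψ l) _ _).sub
        (((integrable_emp (ψ l) (hψ l) _).const_mul (c l)).const_mul 2)).add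
        (integrable_const _)
    rw [integral_finset_sum _ fun l _ => hintl l]
    have : ∀ l ∈ (Finset.univ : Finset Λ),
        (∫ ω : Fin n → X, (emp ω Finset.univ (ψ l) * emp ω Finset.univ (ψ l)
          - 2 * (c l * emp ω Finset.univ (ψ l)) + (c l) ^ 2) ∂(Measure.pi fun _ => P))
        = 1 / ((V : ℝ) * q) * d l := by
      intro l _
      have i1 : Integrable (fun ω : Fin n → X =>
          emp ω Finset.univ (ψ l) * emp ω Finset.univ (ψ l)
            - 2 * (c l * emp ω Finset.univ (ψ l))) (Measure.pi fun _ => P) :=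
        (integrable_emp_mul (ψ l) (hψ l) _ _).sub
          (((integrable_emp (ψ l) (hψ l) _).const_mul (c l)).const_mul 2)
      rw [integral_add i1 (integrable_const _),
        integral_sub (integrable_emp_mul (ψ l) (hψ l) _ _)
          (((integrable_emp (ψ l) (hψ l) _).const_mul (c l)).const_mul 2),
        integral_const_mul, integral_const_mul, huu l, hu l, integral_const]
      simp [measure_univ]
      field_simp
      ring
    rw [Finset.sum_congr rfl this, ← Finset.mul_sum, ← hDm, hnq]
    field_simp
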